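/- arXiv:2012.04541 — 3 statements merged into one kernel-verified Lean document; each statement's English description precedes it below -/
import Mathlib

section
/- Let (Z_j)_{j≥0} be an i.i.d. sequence of ℝ^d-valued random vectors with E[log⁺‖Z₀‖] < ∞, and let P ∈ ℝ^{d×d} with ρ(P) < 1. Then almost surely ∑_{j=0}^∞ ‖P^j Z_j‖ < ∞. -/
open MeasureTheory ProbabilityTheory Matrix Filter

/-- The spectral radius of a real `d × d` matrix: the supremum of the moduli of its complex
eigenvalues. -/
noncomputable def specRad {d : ℕ} (P : Matrix (Fin d) (Fin d) ℝ) : ℝ :=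
  sSup ((fun z : ℂ => ‖z‖) '' spectrum ℂ (P.map (algebraMap ℝ ℂ)))

/-- A real `d × d` matrix acting on Euclidean space. -/
noncomputable def mApp {d : ℕ} (P : Matrix (Fin d) (Fin d) ℝ)
    (x : EuclideanSpace ℝ (Fin d)) : EuclideanSpace ℝ (Fin d) :=
  Matrix.toEuclideanCLM (𝕜 := ℝ) P x

/-- `log⁺ x = max (log x) 0`. -/
noncomputable def logPlus (x : ℝ) : ℝ := max (Real.log x) 0

open scoped ENNReal NNReal

lemma mApp_norm_eq {d : ℕ} (A : Matrix (Fin d) (Fin d) ℝ) (x : EuclideanSpace ℝ (Fin d)) :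
    ‖mApp A x‖ = ‖(Matrix.toEuclideanCLM (𝕜 := ℂ) (A.map (algebraMap ℝ ℂ)))
      ((WithLp.equiv 2 _).symm (fun i => (x i : ℂ)))‖ := by
  rw [EuclideanSpace.norm_eq, EuclideanSpace.norm_eq]
  congr 1
  apply Finset.sum_congr rfl
  intro i _
  congr 1
  have h1 : (mApp A x) i = A.mulVec (fun j => x j) i := rfl
  have h2 : ((Matrix.toEuclideanCLM (𝕜 := ℂ) (A.map (algebraMap ℝ ℂ)))
      ((WithLp.equiv 2 _).symm (fun i => (x i : ℂ)))) i
      = (A.map (algebraMap ℝ ℂ)).mulVec (fun j => (x j : ℂ)) i := rfl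
  rw [h1, h2]
  simp only [Matrix.mulVec, dotProduct, Matrix.map_apply]
  rw [show ∑ j, (algebraMap ℝ ℂ) (A i j) * ((x j : ℂ)) = ((∑ j, A i j * x j : ℝ) : ℂ) by
    push_cast [Complex.coe_algebraMap]; ring]
  rw [Complex.norm_real]

lemma complexify_norm_eq {d : ℕ} (x : EuclideanSpace ℝ (Fin d)) :
    ‖((WithLp.equiv 2 _).symm (fun i => (x i : ℂ)) : EuclideanSpace ℂ (Fin d))‖ = ‖x‖ := by
  rw [EuclideanSpace.norm_eq, EuclideanSpace.norm_eq]
  congr 1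
  apply Finset.sum_congr rfl
  intro i _
  congr 1
  exact Complex.norm_real _

lemma opBound {d : ℕ} (P : Matrix (Fin d) (Fin d) ℝ) (hP : specRad P < 1) :
    ∃ r C : ℝ, 0 < r ∧ r < 1 ∧ 1 ≤ C ∧
      ∀ (n : ℕ) (x : EuclideanSpace ℝ (Fin d)), ‖mApp (P ^ n) x‖ ≤ C * r ^ n * ‖x‖ := by
  set Q : Matrix (Fin d) (Fin d) ℂ := P.map (algebraMap ℝ ℂ) with hQ
  set T : EuclideanSpace ℂ (Fin d) →L[ℂ] EuclideanSpace ℂ (Fin d) :=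
    Matrix.toEuclideanCLM (𝕜 := ℂ) Q with hT
  have hspec : spectrum ℂ T = spectrum ℂ Q := AlgEquiv.spectrum_eq _ _
  have hbdd : BddAbove ((fun z : ℂ => ‖z‖) '' spectrum ℂ Q) := by
    rw [← hspec]
    exact ((spectrum.isCompact T).image continuous_norm).bddAbove
  have hsr : spectralRadius ℂ T < 1 := by
    calc spectralRadius ℂ T ≤ ENNReal.ofReal (specRad P) := by
          refine iSup₂_le fun k hk => ?_
          have hk' : ‖k‖ ≤ specRad P := le_csSup hbdd ⟨k, hspec ▸ hk, rfl⟩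
          rw [← ENNReal.ofReal_coe_nnreal, coe_nnnorm]
          exact ENNReal.ofReal_le_ofReal hk'
      _ < 1 := ENNReal.ofReal_lt_one.mpr hP
  obtain ⟨t, ht1, ht2⟩ := ENNReal.lt_iff_exists_nnreal_btwn.mp hsr
  have ht2' : (t : ℝ) < 1 := ENNReal.coe_lt_one_iff.mp ht2
  have hG := spectrum.pow_nnnorm_pow_one_div_tendsto_nhds_spectralRadius T
  have hev : ∀ᶠ n : ℕ in atTop, (‖T ^ n‖₊ : ℝ≥0∞) ^ (1 / (n : ℝ)) < (t : ℝ≥0∞) :=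
    hG.eventually_lt_const ht1
  obtain ⟨N, hN⟩ := (hev.and (eventually_ge_atTop 1)).exists_forall_of_atTop
  set r : ℝ := max (t : ℝ) (1 / 2) with hrdef
  have hr0 : 0 < r := lt_max_of_lt_right one_half_pos
  have hr1 : r < 1 := max_lt ht2' one_half_lt_one
  have hkey : ∀ n ≥ N, ‖T ^ n‖ ≤ r ^ n := by
    intro n hn
    obtain ⟨h1, h2⟩ := hN n hn
    have hn0 : (0 : ℝ) < n := by exact_mod_cast h2
    have h3 : ((‖T ^ n‖₊ : ℝ≥0∞) ^ (1 / (n : ℝ))) ^ (n : ℝ) < ((t : ℝ≥0∞)) ^ (n : ℝ) :=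
      ENNReal.rpow_lt_rpow h1 hn0
    rw [← ENNReal.rpow_mul, one_div, inv_mul_cancel₀ (ne_of_gt hn0), ENNReal.rpow_one] at h3
    have h4 : (‖T ^ n‖₊ : ℝ≥0∞) < ((t : ℝ≥0∞)) ^ (n : ℕ) := by
      rwa [ENNReal.rpow_natCast] at h3
    have h5 : ‖T ^ n‖₊ < t ^ n := by exact_mod_cast h4
    have h6 : ‖T ^ n‖ ≤ (t : ℝ) ^ n := by
      have := le_of_lt h5
      exact_mod_cast this
    exact h6.trans (pow_le_pow_left₀ (t.2) (le_max_left _ _) n)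
  set C : ℝ := 1 + ∑ k ∈ Finset.range N, ‖T ^ k‖ / r ^ k with hCdef
  have hC1 : 1 ≤ C := by
    have : (0 : ℝ) ≤ ∑ k ∈ Finset.range N, ‖T ^ k‖ / r ^ k :=
      Finset.sum_nonneg fun k _ => div_nonneg (norm_nonneg _) (le_of_lt (pow_pos hr0 k))
    rw [hCdef]; linarith
  have hTC : ∀ n : ℕ, ‖T ^ n‖ ≤ C * r ^ n := by
    intro n
    rcases lt_or_ge n N with h | h
    · have h1 : ‖T ^ n‖ / r ^ n ≤ ∑ k ∈ Finset.range N, ‖T ^ k‖ / r ^ k :=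
        Finset.single_le_sum (f := fun k => ‖T ^ k‖ / r ^ k)
          (fun k _ => div_nonneg (norm_nonneg _) (le_of_lt (pow_pos hr0 k)))
          (Finset.mem_range.mpr h)
      have h2 : ‖T ^ n‖ / r ^ n ≤ C := by simp only [hCdef]; linarith
      calc ‖T ^ n‖ = (‖T ^ n‖ / r ^ n) * r ^ n :=
            (div_mul_cancel₀ _ (ne_of_gt (pow_pos hr0 n))).symm
        _ ≤ C * r ^ n := mul_le_mul_of_nonneg_right h2 (le_of_lt (pow_pos hr0 n))
    · calc ‖T ^ n‖ ≤ r ^ n := hkey n h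
        _ ≤ C * r ^ n := le_mul_of_one_le_left (le_of_lt (pow_pos hr0 n)) hC1
  refine ⟨r, C, hr0, hr1, hC1, fun n x => ?_⟩
  have hmap : (P ^ n).map (algebraMap ℝ ℂ) = Q ^ n := by
    have := map_pow ((algebraMap ℝ ℂ).mapMatrix) P n
    simpa [RingHom.mapMatrix_apply, hQ] using this
  have hTn : Matrix.toEuclideanCLM (𝕜 := ℂ) ((P ^ n).map (algebraMap ℝ ℂ)) = T ^ n := by
    rw [hmap, map_pow]
  calc ‖mApp (P ^ n) x‖
      = ‖(Matrix.toEuclideanCLM (𝕜 := ℂ) ((P ^ n).map (algebraMap ℝ ℂ)))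
          ((WithLp.equiv 2 _).symm (fun i => (x i : ℂ)))‖ := mApp_norm_eq _ _
    _ = ‖(T ^ n) ((WithLp.equiv 2 _).symm (fun i => (x i : ℂ)))‖ := by rw [hTn]
    _ ≤ ‖T ^ n‖ * ‖((WithLp.equiv 2 _).symm (fun i => (x i : ℂ)) : EuclideanSpace ℂ (Fin d))‖ :=
        (T ^ n).le_opNorm _
    _ = ‖T ^ n‖ * ‖x‖ := by rw [complexify_norm_eq]
    _ ≤ C * r ^ n * ‖x‖ := mul_le_mul_of_nonneg_right (hTC n) (norm_nonneg _)

lemma tsum_meas_lt_top {Ω : Type*} [MeasurableSpace Ω] (μ : Measure Ω) [IsProbabilityMeasure μ]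
    (X : Ω → ℝ) (hX : Measurable X) (hX0 : ∀ ω, 0 ≤ X ω) {c : ℝ} (hc : 0 < c)
    (hint : ∫⁻ ω, ENNReal.ofReal (X ω) ∂μ < ⊤) :
    ∑' j : ℕ, μ {ω | (j : ℝ) * c ≤ X ω} < ⊤ := by
  have hmeas : ∀ j : ℕ, MeasurableSet {ω | (j : ℝ) * c ≤ X ω} := fun j =>
    measurableSet_le measurable_const hX
  have key : ∀ ω, (∑' j : ℕ, Set.indicator {ω | (j : ℝ) * c ≤ X ω} (fun _ => (1 : ℝ≥0∞)) ω)
      ≤ ENNReal.ofReal (X ω) * ENNReal.ofReal c⁻¹ + 1 := by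
    intro ω
    set N := ⌊X ω / c⌋₊ with hNdef
    have heq : (fun j : ℕ => Set.indicator {ω | (j : ℝ) * c ≤ X ω} (fun _ => (1 : ℝ≥0∞)) ω)
        = fun j => if j ≤ N then 1 else 0 := by
      funext j
      have hiff : (j : ℝ) * c ≤ X ω ↔ j ≤ N := by
        rw [hNdef, Nat.le_floor_iff (div_nonneg (hX0 ω) hc.le), le_div_iff₀ hc]
      simp only [Set.indicator_apply, Set.mem_setOf_eq, hiff]
    rw [heq]
    have hts : ∑' j : ℕ, (if j ≤ N then (1 : ℝ≥0∞) else 0) = ((N + 1 : ℕ) : ℝ≥0∞) := by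
      rw [tsum_eq_sum (s := Finset.range (N + 1))
        (fun b hb => if_neg (by simpa [Nat.lt_succ_iff] using hb))]
      rw [Finset.sum_congr rfl (fun b hb => if_pos (Nat.lt_succ_iff.mp (Finset.mem_range.mp hb)))]
      simp
    rw [hts]
    have hN : ((N : ℕ) : ℝ≥0∞) ≤ ENNReal.ofReal (X ω) * ENNReal.ofReal c⁻¹ := by
      rw [← ENNReal.ofReal_mul (hX0 ω), ← ENNReal.ofReal_natCast]
      apply ENNReal.ofReal_le_ofReal
      calc (N : ℝ) ≤ X ω / c := Nat.floor_le (div_nonneg (hX0 ω) hc.le)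
        _ = X ω * c⁻¹ := div_eq_mul_inv _ _
    push_cast
    exact add_le_add hN le_rfl
  calc ∑' j : ℕ, μ {ω | (j : ℝ) * c ≤ X ω}
      = ∑' j : ℕ, ∫⁻ ω, Set.indicator {ω | (j : ℝ) * c ≤ X ω} (fun _ => (1 : ℝ≥0∞)) ω ∂μ := by
        refine tsum_congr fun j => ?_
        rw [lintegral_indicator (hmeas j), setLIntegral_one]
    _ = ∫⁻ ω, ∑' j : ℕ, Set.indicator {ω | (j : ℝ) * c ≤ X ω} (fun _ => (1 : ℝ≥0∞)) ω ∂μ :=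
        (lintegral_tsum fun j => (measurable_const.indicator (hmeas j)).aemeasurable).symm
    _ ≤ ∫⁻ ω, (ENNReal.ofReal (X ω) * ENNReal.ofReal c⁻¹ + 1) ∂μ := lintegral_mono key
    _ = (∫⁻ ω, ENNReal.ofReal (X ω) ∂μ) * ENNReal.ofReal c⁻¹ + 1 := by
        rw [lintegral_add_right _ measurable_const, lintegral_const, measure_univ, mul_one,
          lintegral_mul_const _ hX.ennreal_ofReal]
    _ < ⊤ := by
        refine ENNReal.add_lt_top.mpr ⟨ENNReal.mul_lt_top hint ?_, ENNReal.one_lt_top⟩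
        exact ENNReal.ofReal_lt_top

theorem summable_norm_pow_smul_of_iid {d : ℕ} {Ω : Type*} [MeasurableSpace Ω]
    (μ : Measure Ω) [IsProbabilityMeasure μ]
    (Z : ℕ → Ω → EuclideanSpace ℝ (Fin d)) (hmeas : ∀ j, Measurable (Z j))
    (hindep : iIndepFun Z μ)
    (hident : ∀ j, IdentDistrib (Z j) (Z 0) μ μ)
    (P : Matrix (Fin d) (Fin d) ℝ) (hP : specRad P < 1)
    (hlog : ∫⁻ ω, ENNReal.ofReal (logPlus ‖Z 0 ω‖) ∂μ < ⊤) :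
    ∀ᵐ ω ∂μ, Summable fun j : ℕ => ‖mApp (P ^ j) (Z j ω)‖ := by
  obtain ⟨r, C, hr0, hr1, hC1, hbound⟩ := opBound P hP
  set a : ℝ := (1 + r⁻¹) / 2 with hadef
  have hrinv : 1 < r⁻¹ := (one_lt_inv₀ hr0).mpr hr1
  have ha1 : 1 < a := by rw [hadef]; linarith
  have hra : r * a < 1 := by
    have h : r * a = (r + 1) / 2 := by
      rw [hadef]; field_simp
    rw [h]; linarith
  set c : ℝ := Real.log a with hcdef
  have hc : 0 < c := Real.log_pos ha1
  set X : Ω → ℝ := fun ω => logPlus ‖Z 0 ω‖ with hXdef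
  have hXmeas : Measurable X :=
    ((Real.measurable_log.comp (hmeas 0).norm).max measurable_const)
  have hX0 : ∀ ω, 0 ≤ X ω := fun ω => le_max_right _ _
  have htsum := tsum_meas_lt_top μ X hXmeas hX0 hc hlog
  set s : ℕ → Set Ω := fun j => {ω | a ^ j < ‖Z j ω‖} with hsdef
  have hμs : ∀ j, μ (s j) ≤ μ {ω | (j : ℝ) * c ≤ X ω} := by
    intro j
    have hms : MeasurableSet {v : EuclideanSpace ℝ (Fin d) | a ^ j < ‖v‖} :=
      measurableSet_lt measurable_const measurable_norm
    have hid : μ (s j) = μ {ω | a ^ j < ‖Z 0 ω‖} := (hident j).measure_mem_eq hms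
    rw [hid]
    apply measure_mono
    intro ω hω
    have hω' : a ^ j < ‖Z 0 ω‖ := hω
    have hpos : (0 : ℝ) < a ^ j := pow_pos (lt_trans zero_lt_one ha1) j
    calc (j : ℝ) * c = Real.log (a ^ j) := by rw [Real.log_pow, hcdef]
      _ ≤ Real.log ‖Z 0 ω‖ := Real.log_le_log hpos hω'.le
      _ ≤ X ω := le_max_left _ _
  have hsum : ∑' j, μ (s j) ≠ ⊤ :=
    ne_top_of_le_ne_top htsum.ne (ENNReal.tsum_le_tsum hμs)
  filter_upwards [MeasureTheory.ae_eventually_notMem hsum] with ω hω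
  obtain ⟨N, hN⟩ := eventually_atTop.mp hω
  have hgs : Summable (fun j : ℕ => (r * a) ^ j) :=
    summable_geometric_of_lt_one (by positivity) hra
  apply summable_of_isBigO_nat hgs
  apply Asymptotics.IsBigO.of_bound C
  rw [eventually_atTop]
  refine ⟨N, fun j hj => ?_⟩
  have hZ : ‖Z j ω‖ ≤ a ^ j := not_lt.mp (hN j hj)
  have h1 : ‖mApp (P ^ j) (Z j ω)‖ ≤ C * r ^ j * ‖Z j ω‖ := hbound j _
  have h2 : C * r ^ j * ‖Z j ω‖ ≤ C * r ^ j * a ^ j := by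
    apply mul_le_mul_of_nonneg_left hZ
    positivity
  have h3 : C * r ^ j * a ^ j = C * (r * a) ^ j := by rw [mul_pow, ← mul_assoc]
  rw [Real.norm_eq_abs, Real.norm_eq_abs, abs_of_nonneg (norm_nonneg _),
    abs_of_nonneg (by positivity : (0:ℝ) ≤ (r * a) ^ j)]
  linarith
end

section
/- Let (Z_j)_{j≥0} be an i.i.d. sequence of ℝ^d-valued random vectors, and let P ∈ ℝ^{d×d} be invertible with ρ(P) < 1. If P^j Z_j → 0 almost surely as j → ∞, then E[log⁺‖Z₀‖] < ∞. -/
open MeasureTheory ProbabilityTheory Matrix Filter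

/-- Preimages of measurable sets under independent random variables are independent sets. -/
lemma iIndepSet_preimage {Ω E : Type*} [MeasurableSpace Ω] [MeasurableSpace E]
    (μ : Measure Ω) (Z : ℕ → Ω → E)
    (hindep : iIndepFun Z μ)
    (B : ℕ → Set E) (hB : ∀ j, MeasurableSet (B j)) :
    iIndepSet (fun j => Z j ⁻¹' B j) μ := by
  rw [iIndepSet_iff_iIndep]
  have h := (iIndepFun_iff_iIndep _ _ _).mp hindep
  rw [iIndep_iff] at h ⊢
  intro s f hf
  refine h s (fun i hi => ?_)
  have hle : MeasurableSpace.generateFrom {Z i ⁻¹' B i}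
      ≤ MeasurableSpace.comap (Z i) inferInstance := by
    refine MeasurableSpace.generateFrom_le fun t ht => ?_
    rw [Set.mem_singleton_iff] at ht
    exact ⟨B i, hB i, ht.symm⟩
  exact hle _ (hf i hi)

/-- A pointwise bound used for the layer-cake style estimate. -/
lemma ofReal_le_add_tsum_indicator {Ω : Type*} (c : ℝ) (hc : 0 < c) (y : ℝ) (hy : 0 ≤ y)
    (A : ℕ → Set Ω) (ω : Ω) (hA : ∀ j : ℕ, c * (j + 1) ≤ y → ω ∈ A j) :
    ENNReal.ofReal y ≤ ENNReal.ofReal c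
      + ∑' j : ℕ, (A j).indicator (fun _ => ENNReal.ofReal c) ω := by
  set k : ℕ := ⌊y / c⌋₊ with hk
  have hky : c * k ≤ y := by
    have := Nat.floor_le (div_nonneg hy hc.le)
    calc c * k = k * c := mul_comm _ _
      _ ≤ (y / c) * c := by nlinarith
      _ = y := div_mul_cancel₀ y hc.ne'
  have hyk : y ≤ c + c * k := by
    have h2 : y / c < (k : ℝ) + 1 := Nat.lt_floor_add_one (y / c)
    have h3 : y < ((k : ℝ) + 1) * c := (div_lt_iff₀ hc).mp h2
    nlinarith
  have hsum : (k : ENNReal) * ENNReal.ofReal c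
      ≤ ∑' j : ℕ, (A j).indicator (fun _ => ENNReal.ofReal c) ω := by
    have hle : ∀ j ∈ Finset.range k, (A j).indicator (fun _ => ENNReal.ofReal c) ω
        = ENNReal.ofReal c := by
      intro j hj
      rw [Finset.mem_range] at hj
      have : c * (j + 1) ≤ y := by
        have h1 : (j : ℝ) + 1 ≤ (k : ℝ) := by exact_mod_cast Nat.succ_le_of_lt hj
        nlinarith
      simp [Set.indicator_of_mem (hA j this)]
    calc (k : ENNReal) * ENNReal.ofReal c
        = ∑ j ∈ Finset.range k, (A j).indicator (fun _ => ENNReal.ofReal c) ω := by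
          rw [Finset.sum_congr rfl hle]; simp [mul_comm]
      _ ≤ _ := ENNReal.sum_le_tsum _
  calc ENNReal.ofReal y ≤ ENNReal.ofReal (c + c * k) := ENNReal.ofReal_le_ofReal hyk
    _ = ENNReal.ofReal c + ENNReal.ofReal (c * k) := ENNReal.ofReal_add hc.le (by positivity)
    _ = ENNReal.ofReal c + (k : ENNReal) * ENNReal.ofReal c := by
        rw [ENNReal.ofReal_mul hc.le, ENNReal.ofReal_natCast, mul_comm]
    _ ≤ _ := add_le_add le_rfl hsum

theorem finite_log_moment_of_tendsto_zero {d : ℕ} {Ω : Type*} [MeasurableSpace Ω]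
    (μ : Measure Ω) [IsProbabilityMeasure μ]
    (Z : ℕ → Ω → EuclideanSpace ℝ (Fin d)) (hmeas : ∀ j, Measurable (Z j))
    (hindep : iIndepFun Z μ)
    (hident : ∀ j, IdentDistrib (Z j) (Z 0) μ μ)
    (P : Matrix (Fin d) (Fin d) ℝ) (hPinv : IsUnit P) (hP : specRad P < 1)
    (htends : ∀ᵐ ω ∂μ,
      Filter.Tendsto (fun j : ℕ => mApp (P ^ j) (Z j ω)) atTop (nhds 0)) :
    ∫⁻ ω, ENNReal.ofReal (logPlus ‖Z 0 ω‖) ∂μ < ⊤ := by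
  classical
  have hdet : IsUnit P.det := (Matrix.isUnit_iff_isUnit_det P).mp hPinv
  set Q : EuclideanSpace ℝ (Fin d) →L[ℝ] EuclideanSpace ℝ (Fin d) :=
    Matrix.toEuclideanCLM (𝕜 := ℝ) P⁻¹ with hQdef
  set R : ℝ := max ‖Q‖ 1 with hRdef
  have hR1 : (1 : ℝ) ≤ R := le_max_right _ _
  have hR0 : (0 : ℝ) < R := lt_of_lt_of_le one_pos hR1
  have hlogR : 0 ≤ Real.log R := Real.log_nonneg hR1
  -- norm bound on powers of Q
  have hQpow : ∀ (j : ℕ) (v : EuclideanSpace ℝ (Fin d)), ‖(Q ^ j) v‖ ≤ R ^ j * ‖v‖ := by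
    intro j
    induction j with
    | zero => intro v; simp
    | succ n ih =>
      intro v
      rw [pow_succ]
      calc ‖(Q ^ n * Q) v‖ = ‖(Q ^ n) (Q v)‖ := rfl
        _ ≤ R ^ n * ‖Q v‖ := ih _
        _ ≤ R ^ n * (R * ‖v‖) := by
            refine mul_le_mul_of_nonneg_left ?_ (pow_nonneg hR0.le n)
            exact le_trans (Q.le_opNorm v)
              (mul_le_mul_of_nonneg_right (le_max_left _ _) (norm_nonneg v))
        _ = R ^ (n + 1) * ‖v‖ := by ring
  -- key inequality ‖x‖ ≤ R^j * ‖P^j x‖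
  have hkey : ∀ (j : ℕ) (x : EuclideanSpace ℝ (Fin d)),
      ‖x‖ ≤ R ^ j * ‖mApp (P ^ j) x‖ := by
    intro j x
    have hcomm : Commute P⁻¹ P := by
      unfold Commute SemiconjBy
      rw [Matrix.nonsing_inv_mul P hdet, Matrix.mul_nonsing_inv P hdet]
    have h1 : (P⁻¹) ^ j * P ^ j = 1 := by
      rw [← hcomm.mul_pow, Matrix.nonsing_inv_mul P hdet, one_pow]
    have h2 : (Q ^ j) (mApp (P ^ j) x) = x := by
      rw [hQdef, ← map_pow, mApp]
      have : (Matrix.toEuclideanCLM (𝕜 := ℝ) ((P⁻¹) ^ j))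
          ((Matrix.toEuclideanCLM (𝕜 := ℝ) (P ^ j)) x)
          = (Matrix.toEuclideanCLM (𝕜 := ℝ) ((P⁻¹) ^ j * P ^ j)) x := by
        rw [_root_.map_mul]; rfl
      rw [this, h1, _root_.map_one]; rfl
    calc ‖x‖ = ‖(Q ^ j) (mApp (P ^ j) x)‖ := by rw [h2]
      _ ≤ R ^ j * ‖mApp (P ^ j) x‖ := hQpow j _
  -- the constant
  set c : ℝ := Real.log R + 1 with hcdef
  have hc : 0 < c := by positivity
  -- events
  set B : ℕ → Set (EuclideanSpace ℝ (Fin d)) :=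
    fun j => {x | c * (j + 1) ≤ logPlus ‖x‖} with hBdef
  have hBmeas : ∀ j, MeasurableSet (B j) := by
    intro j
    have hm : Measurable fun x : EuclideanSpace ℝ (Fin d) => logPlus ‖x‖ := by
      unfold logPlus
      exact (Real.measurable_log.comp measurable_norm).max measurable_const
    exact measurableSet_le measurable_const hm
  set A : ℕ → Set Ω := fun j => Z j ⁻¹' B j with hAdef
  have hAmeas : ∀ j, MeasurableSet (A j) := fun j => (hmeas j) (hBmeas j)
  have hAindep : iIndepSet A μ := iIndepSet_preimage μ Z hindep B hBmeas
  -- a.s. eventually not in A j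
  have hlimsup : μ (limsup A atTop) = 0 := by
    have hae : ∀ᵐ ω ∂μ, ω ∉ limsup A atTop := by
      filter_upwards [htends] with ω hω
      rw [mem_limsup_iff_frequently_mem, not_frequently]
      have hev : ∀ᶠ j in atTop, ‖mApp (P ^ j) (Z j ω)‖ < 1 := by
        have := hω.eventually (Metric.ball_mem_nhds (0 : EuclideanSpace ℝ (Fin d)) one_pos)
        filter_upwards [this] with j hj
        simpa [Metric.mem_ball, dist_zero_right] using hj
      filter_upwards [hev] with j hj
      intro hmem
      have hnorm : ‖Z j ω‖ ≤ R ^ j := by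
        calc ‖Z j ω‖ ≤ R ^ j * ‖mApp (P ^ j) (Z j ω)‖ := hkey j _
          _ ≤ R ^ j * 1 := mul_le_mul_of_nonneg_left hj.le (pow_nonneg hR0.le j)
          _ = R ^ j := mul_one _
      have hlog : logPlus ‖Z j ω‖ ≤ j * Real.log R := by
        unfold logPlus
        refine max_le ?_ (by positivity)
        rcases le_or_gt ‖Z j ω‖ 1 with h | h
        · exact le_trans (Real.log_nonpos (norm_nonneg _) h) (by positivity)
        · calc Real.log ‖Z j ω‖ ≤ Real.log (R ^ j) :=
              Real.log_le_log (lt_trans one_pos h) hnorm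
            _ = j * Real.log R := by rw [Real.log_pow]
      have hmem' : c * (j + 1) ≤ logPlus ‖Z j ω‖ := hmem
      have hfin : c * (j + 1) ≤ j * Real.log R := le_trans hmem' hlog
      rw [hcdef] at hfin
      nlinarith [hlogR, Nat.cast_nonneg (α := ℝ) j]
    exact measure_eq_zero_iff_ae_notMem.mpr hae
  -- Borel-Cantelli II contrapositive
  have hsum : (∑' j, μ (A j)) ≠ ⊤ := by
    intro h
    have := measure_limsup_eq_one hAmeas hAindep h
    rw [hlimsup] at this
    exact zero_ne_one this
  -- identical distribution
  have hAeq : ∀ j, μ (A j) = μ (Z 0 ⁻¹' B j) := by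
    intro j
    have hmap : Measure.map (Z j) μ = Measure.map (Z 0) μ := (hident j).map_eq
    rw [hAdef]
    calc μ (Z j ⁻¹' B j) = Measure.map (Z j) μ (B j) :=
          (Measure.map_apply (hmeas j) (hBmeas j)).symm
      _ = Measure.map (Z 0) μ (B j) := by rw [hmap]
      _ = μ (Z 0 ⁻¹' B j) := Measure.map_apply (hmeas 0) (hBmeas j)
  -- final estimate
  set S : ℕ → Set Ω := fun j => Z 0 ⁻¹' B j with hSdef
  have hSmeas : ∀ j, MeasurableSet (S j) := fun j => (hmeas 0) (hBmeas j)
  have hSsum : (∑' j, μ (S j)) ≠ ⊤ := by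
    have : (∑' j, μ (S j)) = ∑' j, μ (A j) := by
      refine tsum_congr fun j => (hAeq j).symm
    rw [this]; exact hsum
  have hptwise : ∀ ω, ENNReal.ofReal (logPlus ‖Z 0 ω‖) ≤ ENNReal.ofReal c
      + ∑' j : ℕ, (S j).indicator (fun _ => ENNReal.ofReal c) ω := by
    intro ω
    refine ofReal_le_add_tsum_indicator c hc (logPlus ‖Z 0 ω‖)
      (le_max_right _ _) S ω fun j hj => ?_
    exact hj
  calc ∫⁻ ω, ENNReal.ofReal (logPlus ‖Z 0 ω‖) ∂μ
      ≤ ∫⁻ ω, (ENNReal.ofReal c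
          + ∑' j : ℕ, (S j).indicator (fun _ => ENNReal.ofReal c) ω) ∂μ :=
        lintegral_mono hptwise
    _ = ENNReal.ofReal c + ∫⁻ ω, ∑' j : ℕ,
          (S j).indicator (fun _ => ENNReal.ofReal c) ω ∂μ := by
        rw [lintegral_add_left measurable_const]
        simp
    _ = ENNReal.ofReal c + ∑' j : ℕ, ENNReal.ofReal c * μ (S j) := by
        rw [lintegral_tsum fun j =>
          ((measurable_const.indicator (hSmeas j)).aemeasurable)]
        congr 1
        exact tsum_congr fun j => lintegral_indicator_const (hSmeas j) _
    _ = ENNReal.ofReal c + ENNReal.ofReal c * ∑' j, μ (S j) := by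
        rw [ENNReal.tsum_mul_left]
    _ < ⊤ := by
        have h1 : ENNReal.ofReal c ≠ ⊤ := ENNReal.ofReal_ne_top
        have h2 : ENNReal.ofReal c * ∑' j, μ (S j) ≠ ⊤ :=
          ENNReal.mul_ne_top h1 hSsum
        exact ENNReal.add_lt_top.mpr ⟨h1.lt_top, h2.lt_top⟩
end

section
/- Let (Z_j)_{j≥0} be an i.i.d. sequence of ℝ^d-valued random vectors and P ∈ ℝ^{d×d} an invertible matrix with ρ(P) < 1. Then the following are equivalent: (i) E[log⁺‖Z₀‖] < ∞; (ii) ∑_{j=0}^∞ ‖P^j Z_j‖ < ∞ a.s.; (iii) ∑_{j=0}^∞ P^j Z_j converges a.s. in ℝ^d; (iv) P^j Z_j → 0 a.s. as j → ∞. -/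
open MeasureTheory ProbabilityTheory Matrix Filter

open scoped ENNReal NNReal
open Set

section Aux

variable {d : ℕ}

lemma mApp_eq' (M : Matrix (Fin d) (Fin d) ℝ) (x : EuclideanSpace ℝ (Fin d)) :
    Matrix.toEuclideanCLM (𝕜 := ℝ) M x
      = (WithLp.equiv 2 _).symm (M.mulVec (WithLp.equiv 2 _ x)) := by
  rfl

lemma mApp_eqC (M : Matrix (Fin d) (Fin d) ℂ) (x : EuclideanSpace ℂ (Fin d)) :
    Matrix.toEuclideanCLM (𝕜 := ℂ) M x
      = (WithLp.equiv 2 _).symm (M.mulVec (WithLp.equiv 2 _ x)) := by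
  rfl

noncomputable def embedC (x : EuclideanSpace ℝ (Fin d)) : EuclideanSpace ℂ (Fin d) :=
  (WithLp.equiv 2 _).symm (fun i => ((WithLp.equiv 2 _ x) i : ℂ))

lemma norm_embedC (x : EuclideanSpace ℝ (Fin d)) : ‖embedC x‖ = ‖x‖ := by
  rw [EuclideanSpace.norm_eq, EuclideanSpace.norm_eq]
  congr 1
  apply Finset.sum_congr rfl
  intro i _
  simp [embedC]

lemma embedC_comm (M : Matrix (Fin d) (Fin d) ℝ) (x : EuclideanSpace ℝ (Fin d)) :
    Matrix.toEuclideanCLM (𝕜 := ℂ) (M.map (algebraMap ℝ ℂ)) (embedC x)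
      = embedC (Matrix.toEuclideanCLM (𝕜 := ℝ) M x) := by
  rw [mApp_eqC, mApp_eq', embedC, embedC]
  congr 1
  ext i
  simp [Matrix.mulVec, dotProduct]

lemma norm_mApp_le (M : Matrix (Fin d) (Fin d) ℝ) (x : EuclideanSpace ℝ (Fin d)) :
    ‖mApp M x‖ ≤ ‖Matrix.toEuclideanCLM (𝕜 := ℂ) (M.map (algebraMap ℝ ℂ))‖ * ‖x‖ := by
  rw [mApp, ← norm_embedC, ← embedC_comm, ← norm_embedC x]
  exact (Matrix.toEuclideanCLM (𝕜 := ℂ) (M.map (algebraMap ℝ ℂ))).le_opNorm _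

/-- Key spectral estimate: if the spectral radius is `< 1` then eventually
`‖P ^ j x‖ ≤ r ^ j * ‖x‖` for some `r < 1`. -/
lemma specRad_eventually_pow_le {P : Matrix (Fin d) (Fin d) ℝ} (hP : specRad P < 1) :
    ∃ r : ℝ, 0 < r ∧ r < 1 ∧ ∀ᶠ j : ℕ in atTop, ∀ x, ‖mApp (P ^ j) x‖ ≤ r ^ j * ‖x‖ := by
  set A : Matrix (Fin d) (Fin d) ℂ := P.map (algebraMap ℝ ℂ) with hA
  set T := Matrix.toEuclideanCLM (𝕜 := ℂ) A with hT
  set r : ℝ := max ((specRad P + 1) / 2) (1 / 2) with hr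
  have hr1 : r < 1 := max_lt (by linarith) (by norm_num)
  have hr0 : 0 < r := lt_of_lt_of_le (by norm_num) (le_max_right _ _)
  refine ⟨r, hr0, hr1, ?_⟩
  have hspec : spectrum ℂ T = spectrum ℂ A := AlgEquiv.spectrum_eq _ A
  have hsr : spectralRadius ℂ T < ENNReal.ofReal r := by
    have hbdd : BddAbove ((fun z : ℂ => ‖z‖) '' spectrum ℂ A) :=
      ((Matrix.finite_spectrum A).image _).bddAbove
    have h1 : spectralRadius ℂ T ≤ ENNReal.ofReal (specRad P) := by
      refine iSup₂_le fun z hz => ?_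
      rw [hspec] at hz
      rw [← (show ENNReal.ofReal ‖z‖ = (‖z‖₊ : ℝ≥0∞) from ofReal_norm _)]
      exact ENNReal.ofReal_le_ofReal (le_csSup hbdd ⟨z, hz, rfl⟩)
    exact lt_of_le_of_lt h1 <| (ENNReal.ofReal_lt_ofReal_iff hr0).2
      (lt_of_lt_of_le (by linarith) (le_max_left _ _))
  have hev : ∀ᶠ n : ℕ in atTop, ((‖T ^ n‖₊ : ℝ≥0∞) ^ (1 / (n:ℝ))) < ENNReal.ofReal r :=
    (spectrum.pow_nnnorm_pow_one_div_tendsto_nhds_spectralRadius T).eventually_lt_const hsr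
  filter_upwards [hev, eventually_gt_atTop 0] with n hn hn0 x
  have hTn : ‖T ^ n‖ ≤ r ^ n := by
    have h2 : (((‖T ^ n‖₊ : ℝ≥0∞) ^ (1 / (n:ℝ))) ^ (n:ℝ)) ≤ (ENNReal.ofReal r) ^ (n:ℝ) :=
      ENNReal.rpow_le_rpow hn.le (by positivity)
    rw [← ENNReal.rpow_mul, one_div, inv_mul_cancel₀ (by exact_mod_cast hn0.ne'),
      ENNReal.rpow_one, ENNReal.rpow_natCast, ← ENNReal.ofReal_pow hr0.le,
      ← (show ENNReal.ofReal ‖T ^ n‖ = (‖T ^ n‖₊ : ℝ≥0∞) from ofReal_norm _), ENNReal.ofReal_le_ofReal_iff (by positivity)] at h2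
    exact h2
  have hpow : T ^ n = Matrix.toEuclideanCLM (𝕜 := ℂ) ((P ^ n).map (algebraMap ℝ ℂ)) := by
    rw [hT, ← map_pow, hA, ← RingHom.mapMatrix_apply, ← RingHom.mapMatrix_apply, ← map_pow]
  calc ‖mApp (P ^ n) x‖
      ≤ ‖Matrix.toEuclideanCLM (𝕜 := ℂ) ((P ^ n).map (algebraMap ℝ ℂ))‖ * ‖x‖ :=
        norm_mApp_le _ x
    _ ≤ r ^ n * ‖x‖ := by
        rw [← hpow]
        exact mul_le_mul_of_nonneg_right hTn (norm_nonneg x)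

lemma norm_le_inv_pow_mul {P : Matrix (Fin d) (Fin d) ℝ} (hPinv : IsUnit P)
    (j : ℕ) (x : EuclideanSpace ℝ (Fin d)) :
    ‖x‖ ≤ ‖Matrix.toEuclideanCLM (𝕜 := ℝ) P⁻¹‖ ^ j * ‖mApp (P ^ j) x‖ := by
  have hdet : IsUnit P.det := (Matrix.isUnit_iff_isUnit_det P).1 hPinv
  induction j with
  | zero =>
    rw [mApp, pow_zero, pow_zero, _root_.map_one, one_mul, ContinuousLinearMap.one_apply]
  | succ j ih =>
    have hkey : Matrix.toEuclideanCLM (𝕜 := ℝ) P⁻¹ (mApp (P ^ (j+1)) x) = mApp (P ^ j) x := by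
      rw [mApp, mApp, ← ContinuousLinearMap.comp_apply, ← ContinuousLinearMap.mul_def,
        ← _root_.map_mul]
      congr 2
      rw [pow_succ']
      rw [← mul_assoc, Matrix.nonsing_inv_mul P hdet, one_mul]
    calc ‖x‖ ≤ ‖Matrix.toEuclideanCLM (𝕜 := ℝ) P⁻¹‖ ^ j * ‖mApp (P ^ j) x‖ := ih
      _ = ‖Matrix.toEuclideanCLM (𝕜 := ℝ) P⁻¹‖ ^ j
          * ‖Matrix.toEuclideanCLM (𝕜 := ℝ) P⁻¹ (mApp (P ^ (j+1)) x)‖ := by rw [hkey]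
      _ ≤ ‖Matrix.toEuclideanCLM (𝕜 := ℝ) P⁻¹‖ ^ j
          * (‖Matrix.toEuclideanCLM (𝕜 := ℝ) P⁻¹‖ * ‖mApp (P ^ (j+1)) x‖) :=
          mul_le_mul_of_nonneg_left ((Matrix.toEuclideanCLM (𝕜 := ℝ) P⁻¹).le_opNorm _)
            (by positivity)
      _ = ‖Matrix.toEuclideanCLM (𝕜 := ℝ) P⁻¹‖ ^ (j+1) * ‖mApp (P ^ (j+1)) x‖ := by ring

end Aux

section ProbAux

variable {Ω : Type*} [MeasurableSpace Ω]

lemma lintegral_le_tsum_meas (μ : Measure Ω) (X : Ω → ℝ) (hX : Measurable X)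
    (hX0 : ∀ ω, 0 ≤ X ω) :
    ∫⁻ ω, ENNReal.ofReal (X ω) ∂μ ≤ ∑' j : ℕ, μ {ω | (j:ℝ) ≤ X ω} := by
  rw [lintegral_eq_lintegral_meas_le μ (Eventually.of_forall hX0) hX.aemeasurable]
  have haux : Ioi (0:ℝ) ⊆ ⋃ j : ℕ, Ico (j:ℝ) (j+1) := fun t ht =>
    mem_iUnion.2 ⟨⌊t⌋₊, Nat.floor_le (le_of_lt ht), Nat.lt_floor_add_one t⟩
  calc ∫⁻ t in Ioi (0:ℝ), μ {a | t ≤ X a}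
      ≤ ∫⁻ t in ⋃ j : ℕ, Ico (j:ℝ) (j+1), μ {a | t ≤ X a} :=
        lintegral_mono_set haux
    _ ≤ ∑' j : ℕ, ∫⁻ t in Ico (j:ℝ) (j+1), μ {a | t ≤ X a} := lintegral_iUnion_le _ _
    _ ≤ ∑' j : ℕ, μ {ω | (j:ℝ) ≤ X ω} := by
        refine ENNReal.tsum_le_tsum fun j => ?_
        calc ∫⁻ t in Ico (j:ℝ) (j+1), μ {a | t ≤ X a}
            ≤ ∫⁻ _ in Ico (j:ℝ) (j+1), μ {ω | (j:ℝ) ≤ X ω} := by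
              refine setLIntegral_mono' measurableSet_Ico fun t ht => ?_
              exact measure_mono fun a ha => le_trans ht.1 ha
          _ = μ {ω | (j:ℝ) ≤ X ω} := by
              rw [setLIntegral_const, Real.volume_Ico]
              simp

lemma tsum_meas_le_lintegral (μ : Measure Ω) (X : Ω → ℝ) (hX : Measurable X)
    (hX0 : ∀ ω, 0 ≤ X ω) :
    ∑' j : ℕ, μ {ω | (j:ℝ) + 1 ≤ X ω} ≤ ∫⁻ ω, ENNReal.ofReal (X ω) ∂μ := by
  rw [lintegral_eq_lintegral_meas_le μ (Eventually.of_forall hX0) hX.aemeasurable]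
  have key : ∀ i j : ℕ, i < j → Disjoint (Ioc (i:ℝ) (i+1)) (Ioc (j:ℝ) (j+1)) := by
    intro i j h
    refine Set.Ioc_disjoint_Ioc.2 ?_
    calc min ((i:ℝ)+1) ((j:ℝ)+1) ≤ (i:ℝ)+1 := min_le_left _ _
      _ ≤ (j:ℝ) := by exact_mod_cast h
      _ ≤ max (i:ℝ) (j:ℝ) := le_max_right _ _
  have hdisj : Pairwise (Function.onFun Disjoint (fun j : ℕ => Ioc (j:ℝ) (j+1))) := by
    intro i j hij
    rcases hij.lt_or_gt with h | h
    · exact key _ _ h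
    · exact (key _ _ h).symm
  have hsub : ⋃ j : ℕ, Ioc (j:ℝ) (j+1) ⊆ Ioi 0 := by
    rintro t ht
    simp only [mem_iUnion] at ht
    obtain ⟨j, hj⟩ := ht
    exact lt_of_le_of_lt (by positivity) hj.1
  calc ∑' j : ℕ, μ {ω | (j:ℝ) + 1 ≤ X ω}
      = ∑' j : ℕ, ∫⁻ _ in Ioc (j:ℝ) (j+1), μ {ω | (j:ℝ) + 1 ≤ X ω} := by
        congr 1; ext j
        rw [setLIntegral_const, Real.volume_Ioc]
        simp
    _ ≤ ∑' j : ℕ, ∫⁻ t in Ioc (j:ℝ) (j+1), μ {a | t ≤ X a} := by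
        refine ENNReal.tsum_le_tsum fun j => ?_
        refine setLIntegral_mono' measurableSet_Ioc fun t ht => ?_
        exact measure_mono fun a ha => le_trans ht.2 ha
    _ = ∫⁻ t in ⋃ j : ℕ, Ioc (j:ℝ) (j+1), μ {a | t ≤ X a} :=
        (lintegral_iUnion (fun j => measurableSet_Ioc) hdisj _).symm
    _ ≤ ∫⁻ t in Ioi (0:ℝ), μ {a | t ≤ X a} := lintegral_mono_set hsub

end ProbAux

theorem tfae_log_moment_summable {d : ℕ} {Ω : Type*} [MeasurableSpace Ω]
    (μ : Measure Ω) [IsProbabilityMeasure μ]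
    (Z : ℕ → Ω → EuclideanSpace ℝ (Fin d)) (hmeas : ∀ j, Measurable (Z j))
    (hindep : iIndepFun Z μ)
    (hident : ∀ j, IdentDistrib (Z j) (Z 0) μ μ)
    (P : Matrix (Fin d) (Fin d) ℝ) (hPinv : IsUnit P) (hP : specRad P < 1) :
    List.TFAE
      [ ∫⁻ ω, ENNReal.ofReal (logPlus ‖Z 0 ω‖) ∂μ < ⊤,
        ∀ᵐ ω ∂μ, Summable fun j : ℕ => ‖mApp (P ^ j) (Z j ω)‖,
        ∀ᵐ ω ∂μ, ∃ L : EuclideanSpace ℝ (Fin d),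
          Filter.Tendsto (fun n : ℕ => ∑ j ∈ Finset.range n, mApp (P ^ j) (Z j ω))
            atTop (nhds L),
        ∀ᵐ ω ∂μ, Filter.Tendsto (fun j : ℕ => mApp (P ^ j) (Z j ω)) atTop (nhds 0) ] := by
  have hlogPlus_meas : Measurable fun ω => logPlus ‖Z 0 ω‖ :=
    (Real.measurable_log.comp (measurable_norm.comp (hmeas 0))).max measurable_const
  have hlogPlus_nonneg : ∀ x : ℝ, 0 ≤ logPlus x := fun x => le_max_right _ _
  tfae_have 1 → 2 := by
    intro hInt
    obtain ⟨r, hr0, hr1, hev⟩ := specRad_eventually_pow_le hP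
    set q : ℝ := Real.sqrt r with hq
    have hq0 : 0 < q := Real.sqrt_pos.2 hr0
    have hq1 : q < 1 := by
      rw [hq, show (1:ℝ) = Real.sqrt 1 from Real.sqrt_one.symm]
      exact Real.sqrt_lt_sqrt hr0.le hr1
    have hqsq : q ^ 2 = r := Real.sq_sqrt hr0.le
    have hrq : r < q := by nlinarith
    set b : ℝ := q / r with hb
    have hb1 : 1 < b := (one_lt_div hr0).2 hrq
    have hb0 : 0 < b := lt_trans one_pos hb1
    have hlogb : 0 < Real.log b := Real.log_pos hb1
    set X : Ω → ℝ := fun ω => logPlus ‖Z 0 ω‖ / Real.log b with hX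
    have hXmeas : Measurable X := hlogPlus_meas.div_const _
    have hX0 : ∀ ω, 0 ≤ X ω := fun ω => div_nonneg (hlogPlus_nonneg _) hlogb.le
    have hXint : ∫⁻ ω, ENNReal.ofReal (X ω) ∂μ < ⊤ := by
      have : ∀ ω, ENNReal.ofReal (X ω)
          = ENNReal.ofReal (logPlus ‖Z 0 ω‖) * ENNReal.ofReal (Real.log b)⁻¹ := by
        intro ω
        show ENNReal.ofReal (logPlus ‖Z 0 ω‖ / Real.log b) = _
        rw [div_eq_mul_inv, ENNReal.ofReal_mul (hlogPlus_nonneg _)]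
      simp_rw [this]
      rw [lintegral_mul_const _ hlogPlus_meas.ennreal_ofReal]
      exact ENNReal.mul_lt_top hInt ENNReal.ofReal_lt_top
    set B : ℕ → Set (EuclideanSpace ℝ (Fin d)) := fun j => {x | b ^ j < ‖x‖} with hBdef
    have hBmeas : ∀ j, MeasurableSet (B j) := fun j =>
      measurableSet_lt measurable_const measurable_norm
    set s : ℕ → Set Ω := fun j => Z j ⁻¹' B j with hsdef
    have hsmeas : ∀ j, MeasurableSet (s j) := fun j => (hmeas j) (hBmeas j)
    have hsident : ∀ j, μ (s j) = μ (Z 0 ⁻¹' B j) := fun j =>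
      (hident j).measure_mem_eq (hBmeas j)
    have hsub : ∀ j : ℕ, Z 0 ⁻¹' B (j+1) ⊆ {ω | (j:ℝ) + 1 ≤ X ω} := by
      intro j ω hω
      have hω' : b ^ (j+1) < ‖Z 0 ω‖ := hω
      have h1 : (0:ℝ) < b ^ (j+1) := by positivity
      have h2 : Real.log (b ^ (j+1)) < Real.log ‖Z 0 ω‖ := Real.log_lt_log h1 hω'
      rw [Real.log_pow] at h2
      have h3 : ((j:ℝ) + 1) * Real.log b ≤ logPlus ‖Z 0 ω‖ := by
        refine le_trans ?_ (le_max_left _ _)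
        push_cast at h2 ⊢
        linarith
      exact (le_div_iff₀ hlogb).2 h3
    have htsum : ∑' j, μ (s j) ≠ ⊤ := by
      have h1 : ∑' j : ℕ, μ (s (j+1)) ≤ ∫⁻ ω, ENNReal.ofReal (X ω) ∂μ := by
        refine le_trans (ENNReal.tsum_le_tsum fun j => ?_)
          (tsum_meas_le_lintegral μ X hXmeas hX0)
        rw [hsident]
        exact measure_mono (hsub j)
      rw [tsum_eq_zero_add' ENNReal.summable]
      exact ENNReal.add_ne_top.2 ⟨measure_ne_top μ _, (h1.trans_lt hXint).ne⟩
    have hae := ae_eventually_notMem htsum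
    filter_upwards [hae] with ω hω
    have hbd : ∀ᶠ j : ℕ in atTop, ‖mApp (P ^ j) (Z j ω)‖ ≤ q ^ j := by
      filter_upwards [hω, hev] with j h1 h2
      have h3 : ‖Z j ω‖ ≤ b ^ j := not_lt.1 h1
      calc ‖mApp (P ^ j) (Z j ω)‖ ≤ r ^ j * ‖Z j ω‖ := h2 _
        _ ≤ r ^ j * b ^ j := mul_le_mul_of_nonneg_left h3 (by positivity)
        _ = q ^ j := by
            rw [← mul_pow]
            congr 1
            rw [hb]
            field_simp
    obtain ⟨N, hN⟩ := eventually_atTop.1 hbd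
    rw [← summable_nat_add_iff N]
    have hgeom : Summable fun n : ℕ => q ^ (n + N) := by
      simp_rw [pow_add]
      exact (summable_geometric_of_lt_one hq0.le hq1).mul_right _
    exact Summable.of_nonneg_of_le (fun n => norm_nonneg _)
      (fun n => hN (n + N) (by omega)) hgeom
  tfae_have 2 → 3 := by
    intro h
    filter_upwards [h] with ω hω
    have hsum : Summable fun j : ℕ => mApp (P ^ j) (Z j ω) := Summable.of_norm hω
    exact ⟨∑' j, mApp (P ^ j) (Z j ω), hsum.hasSum.tendsto_sum_nat⟩
  tfae_have 3 → 4 := by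
    intro h
    filter_upwards [h] with ω hω
    obtain ⟨L, hL⟩ := hω
    have h2 := (hL.comp (tendsto_add_atTop_nat 1)).sub hL
    rw [sub_self] at h2
    have h3 : (fun n : ℕ => mApp (P ^ n) (Z n ω)) = fun n : ℕ =>
        (∑ j ∈ Finset.range (n+1), mApp (P ^ j) (Z j ω))
          - ∑ j ∈ Finset.range n, mApp (P ^ j) (Z j ω) := by
      funext n
      rw [Finset.sum_range_succ]
      abel
    rw [h3]
    simpa [Function.comp] using h2
  tfae_have 4 → 1 := by
    intro h4
    by_contra hInt
    rw [not_lt, top_le_iff] at hInt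
    set c : ℝ := ‖Matrix.toEuclideanCLM (𝕜 := ℝ) P⁻¹‖ with hc
    have hc0 : 0 ≤ c := norm_nonneg _
    set b : ℝ := c + 2 with hb
    have hb1 : 1 < b := by simp only [hb]; linarith
    have hb0 : 0 < b := lt_trans one_pos hb1
    have hlogb : 0 < Real.log b := Real.log_pos hb1
    set X : Ω → ℝ := fun ω => logPlus ‖Z 0 ω‖ / Real.log b with hX
    have hXmeas : Measurable X := hlogPlus_meas.div_const _
    have hX0 : ∀ ω, 0 ≤ X ω := fun ω => div_nonneg (hlogPlus_nonneg _) hlogb.le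
    have hXtop : ∫⁻ ω, ENNReal.ofReal (X ω) ∂μ = ⊤ := by
      have : ∀ ω, ENNReal.ofReal (X ω)
          = ENNReal.ofReal (logPlus ‖Z 0 ω‖) * ENNReal.ofReal (Real.log b)⁻¹ := by
        intro ω
        show ENNReal.ofReal (logPlus ‖Z 0 ω‖ / Real.log b) = _
        rw [div_eq_mul_inv, ENNReal.ofReal_mul (hlogPlus_nonneg _)]
      simp_rw [this]
      rw [lintegral_mul_const _ hlogPlus_meas.ennreal_ofReal, hInt]
      rw [ENNReal.top_mul]
      simp only [ne_eq, ENNReal.ofReal_eq_zero, not_le]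
      positivity
    have htop1 : ∑' j : ℕ, μ {ω | (j:ℝ) ≤ X ω} = ⊤ :=
      top_le_iff.1 (hXtop ▸ lintegral_le_tsum_meas μ X hXmeas hX0)
    have htop2 : ∑' j : ℕ, μ {ω | (j:ℝ) + 1 ≤ X ω} = ⊤ := by
      rw [tsum_eq_zero_add' ENNReal.summable] at htop1
      have := (ENNReal.add_eq_top.1 htop1).resolve_left (measure_ne_top μ _)
      simp only [Nat.cast_add, Nat.cast_one] at this
      exact this
    set B : ℕ → Set (EuclideanSpace ℝ (Fin d)) := fun j => {x | b ^ j < ‖x‖} with hBdef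
    have hBmeas : ∀ j, MeasurableSet (B j) := fun j =>
      measurableSet_lt measurable_const measurable_norm
    set s : ℕ → Set Ω := fun j => Z j ⁻¹' B j with hsdef
    have hsmeas : ∀ j, MeasurableSet (s j) := fun j => (hmeas j) (hBmeas j)
    have hsub : ∀ j : ℕ, {ω | (j:ℝ) + 1 ≤ X ω} ⊆ Z 0 ⁻¹' B j := by
      intro j ω hω
      have h1 : (j:ℝ) < X ω := lt_of_lt_of_le (by linarith) hω
      have h2 : (j:ℝ) * Real.log b < logPlus ‖Z 0 ω‖ := (lt_div_iff₀ hlogb).1 h1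
      have hlp : 0 < logPlus ‖Z 0 ω‖ := lt_of_le_of_lt (by positivity) h2
      have hlog : (j:ℝ) * Real.log b < Real.log ‖Z 0 ω‖ := by
        rcases max_cases (Real.log ‖Z 0 ω‖) 0 with ⟨heq, _⟩ | ⟨heq, hle⟩
        · rwa [logPlus, heq] at h2
        · rw [logPlus, heq] at hlp; linarith
      have hnorm1 : (1:ℝ) < ‖Z 0 ω‖ := by
        by_contra hcon
        push_neg at hcon
        have : Real.log ‖Z 0 ω‖ ≤ 0 := Real.log_nonpos (norm_nonneg _) hcon
        nlinarith [mul_nonneg (Nat.cast_nonneg j : (0:ℝ) ≤ j) hlogb.le]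
      show b ^ j < ‖Z 0 ω‖
      have hbj : (0:ℝ) < b ^ j := by positivity
      rw [← Real.exp_log hbj, ← Real.exp_log (lt_trans one_pos hnorm1)]
      apply Real.exp_lt_exp.2
      rwa [Real.log_pow]
    have htop3 : ∑' j, μ (s j) = ⊤ := by
      rw [← top_le_iff, ← htop2]
      refine ENNReal.tsum_le_tsum fun j => ?_
      calc μ {ω | (j:ℝ) + 1 ≤ X ω} ≤ μ (Z 0 ⁻¹' B j) := measure_mono (hsub j)
        _ = μ (s j) := ((hident j).measure_mem_eq (hBmeas j)).symm
    have hind : iIndepSet s μ := by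
      refine (iIndepSet_iff_meas_biInter hsmeas).2 fun S => ?_
      exact hindep.meas_biInter fun i _ => ⟨B i, hBmeas i, rfl⟩
    have hone := ProbabilityTheory.measure_limsup_eq_one hsmeas hind htop3
    have hms : MeasurableSet (limsup s atTop) := MeasurableSet.measurableSet_limsup hsmeas
    have hcompl : μ (limsup s atTop)ᶜ = 0 := by
      rw [measure_compl hms (measure_ne_top μ _), hone, measure_univ, tsub_self]
    have hae2 : ∀ᵐ ω ∂μ, ω ∈ limsup s atTop := by
      rw [ae_iff]
      convert hcompl using 2
      rfl
    haveI : (MeasureTheory.ae μ).NeBot := ae_neBot.2 (IsProbabilityMeasure.ne_zero μ)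
    obtain ⟨ω, hω1, hω2⟩ := (hae2.and h4).exists
    have hfreq : ∃ᶠ j in atTop, ω ∈ s j := mem_limsup_iff_frequently_mem.1 hω1
    have hev1 : ∀ᶠ j : ℕ in atTop, ‖mApp (P ^ j) (Z j ω)‖ < 1 := by
      have := hω2.norm
      rw [norm_zero] at this
      exact this (Iio_mem_nhds one_pos)
    obtain ⟨j, hj1, hj2⟩ := (hfreq.and_eventually hev1).exists
    have hj1' : b ^ j < ‖Z j ω‖ := hj1
    have hchain : ‖Z j ω‖ ≤ c ^ j := by
      calc ‖Z j ω‖ ≤ c ^ j * ‖mApp (P ^ j) (Z j ω)‖ := norm_le_inv_pow_mul hPinv j _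
        _ ≤ c ^ j * 1 := mul_le_mul_of_nonneg_left hj2.le (by positivity)
        _ = c ^ j := mul_one _
    have hcb : c ^ j ≤ b ^ j := pow_le_pow_left₀ hc0 (by simp only [hb]; linarith) j
    linarith
  tfae_finish
end
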